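/- There exists a constant C′ > 0 such that for every λ ∈ (0,1] and every x ∈ Ω one has 0 < u_λ(x) ≤ C′ λ. -/

import Mathlib

open Set Filter Topology

/-- partial derivative in the first variable. -/
noncomputable def px (g : ℝ × ℝ → ℝ) (p : ℝ × ℝ) : ℝ :=
  deriv (fun t => g (t, p.2)) p.1

/-- partial derivative in the second variable. -/
noncomputable def py (g : ℝ × ℝ → ℝ) (p : ℝ × ℝ) : ℝ :=
  deriv (fun t => g (p.1, t)) p.2

/-- The Laplacian `Δg = g_xx + g_yy`. -/
noncomputable def lapl (g : ℝ × ℝ → ℝ) (p : ℝ × ℝ) : ℝ :=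
  px (px g) p + py (py g) p

/-- `Ω` has `C²` boundary: near each boundary point, `Ω` and `∂Ω` are the sublevel
set and the zero set of a `C²` defining function with nonvanishing gradient. -/
def C2Boundary (Ω : Set (ℝ × ℝ)) : Prop :=
  ∀ p ∈ frontier Ω, ∃ (U : Set (ℝ × ℝ)) (φ : ℝ × ℝ → ℝ),
    IsOpen U ∧ p ∈ U ∧ ContDiff ℝ 2 φ ∧ (∀ q ∈ U, fderiv ℝ φ q ≠ 0) ∧
    (Ω ∩ U = {q ∈ U | φ q < 0}) ∧ (frontier Ω ∩ U = {q ∈ U | φ q = 0})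

/-! ### Auxiliary lemmas -/

lemma slice_x_hasDerivAt {v : ℝ × ℝ → ℝ} {q : ℝ × ℝ} (hv : DifferentiableAt ℝ v q) :
    HasDerivAt (fun t => v (t, q.2)) (fderiv ℝ v q (1, 0)) q.1 :=
  hv.hasFDerivAt.comp_hasDerivAt q.1 (HasDerivAt.prodMk (hasDerivAt_id q.1) (hasDerivAt_const q.1 q.2))

lemma slice_y_hasDerivAt {v : ℝ × ℝ → ℝ} {q : ℝ × ℝ} (hv : DifferentiableAt ℝ v q) :
    HasDerivAt (fun t => v (q.1, t)) (fderiv ℝ v q (0, 1)) q.2 :=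
  hv.hasFDerivAt.comp_hasDerivAt q.2 (HasDerivAt.prodMk (hasDerivAt_const q.2 q.1) (hasDerivAt_id q.2))

lemma eventually_slice_x_mem {s : Set (ℝ × ℝ)} (hs : IsOpen s) {p : ℝ × ℝ} (hp : p ∈ s) :
    ∀ᶠ t in 𝓝 p.1, ((t, p.2) : ℝ × ℝ) ∈ s :=
  (Continuous.continuousAt (by continuity)).preimage_mem_nhds (hs.mem_nhds hp)

lemma eventually_slice_y_mem {s : Set (ℝ × ℝ)} (hs : IsOpen s) {p : ℝ × ℝ} (hp : p ∈ s) :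
    ∀ᶠ t in 𝓝 p.2, ((p.1, t) : ℝ × ℝ) ∈ s :=
  (Continuous.continuousAt (by continuity)).preimage_mem_nhds (hs.mem_nhds hp)

lemma px_slice_diff {u : ℝ × ℝ → ℝ} {s : Set (ℝ × ℝ)} (hs : IsOpen s)
    (hu : ContDiffOn ℝ 2 u s) {p : ℝ × ℝ} (hp : p ∈ s) :
    DifferentiableAt ℝ (fun t => px u (t, p.2)) p.1 := by
  have hf' : ContDiffOn ℝ 1 (fderiv ℝ u) s := hu.fderiv_of_isOpen hs (by norm_num)
  have h1 : DifferentiableAt ℝ (fderiv ℝ u) p :=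
    (hf'.differentiableOn (by norm_num)).differentiableAt (hs.mem_nhds hp)
  have hline : DifferentiableAt ℝ (fun t : ℝ => ((t, p.2) : ℝ × ℝ)) p.1 :=
    DifferentiableAt.prodMk differentiableAt_id (differentiableAt_const _)
  have h2 : DifferentiableAt ℝ (fun t : ℝ => fderiv ℝ u (t, p.2)) p.1 := h1.comp p.1 hline
  have h3 : DifferentiableAt ℝ (fun t : ℝ => fderiv ℝ u (t, p.2) (1, 0)) p.1 :=
    ((ContinuousLinearMap.apply ℝ ℝ ((1:ℝ), (0:ℝ))).differentiableAt).comp p.1 h2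
  refine h3.congr_of_eventuallyEq ?_
  filter_upwards [eventually_slice_x_mem hs hp] with t ht
  exact (slice_x_hasDerivAt ((hu.differentiableOn (by norm_num)).differentiableAt
    (hs.mem_nhds ht))).deriv

lemma py_slice_diff {u : ℝ × ℝ → ℝ} {s : Set (ℝ × ℝ)} (hs : IsOpen s)
    (hu : ContDiffOn ℝ 2 u s) {p : ℝ × ℝ} (hp : p ∈ s) :
    DifferentiableAt ℝ (fun t => py u (p.1, t)) p.2 := by
  have hf' : ContDiffOn ℝ 1 (fderiv ℝ u) s := hu.fderiv_of_isOpen hs (by norm_num)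
  have h1 : DifferentiableAt ℝ (fderiv ℝ u) p :=
    (hf'.differentiableOn (by norm_num)).differentiableAt (hs.mem_nhds hp)
  have hline : DifferentiableAt ℝ (fun t : ℝ => ((p.1, t) : ℝ × ℝ)) p.2 :=
    DifferentiableAt.prodMk (differentiableAt_const _) differentiableAt_id
  have h2 : DifferentiableAt ℝ (fun t : ℝ => fderiv ℝ u (p.1, t)) p.2 := h1.comp p.2 hline
  have h3 : DifferentiableAt ℝ (fun t : ℝ => fderiv ℝ u (p.1, t) (0, 1)) p.2 :=
    ((ContinuousLinearMap.apply ℝ ℝ ((0:ℝ), (1:ℝ))).differentiableAt).comp p.2 h2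
  refine h3.congr_of_eventuallyEq ?_
  filter_upwards [eventually_slice_y_mem hs hp] with t ht
  exact (slice_y_hasDerivAt ((hu.differentiableOn (by norm_num)).differentiableAt
    (hs.mem_nhds ht))).deriv

lemma deriv2_nonpos_of_isLocalMax {g : ℝ → ℝ} {x : ℝ}
    (hg : ∀ᶠ t in 𝓝 x, DifferentiableAt ℝ g t)
    (hg' : DifferentiableAt ℝ (deriv g) x)
    (hmax : IsLocalMax g x) : deriv (deriv g) x ≤ 0 := by
  by_contra hlt
  push_neg at hlt
  have h0 : deriv g x = 0 := hmax.deriv_eq_zero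
  have hd : HasDerivAt (deriv g) (deriv (deriv g) x) x := hg'.hasDerivAt
  rw [hasDerivAt_iff_tendsto_slope] at hd
  have hslope : ∀ᶠ t in 𝓝[≠] x, 0 < slope (deriv g) x t :=
    hd.eventually (eventually_gt_nhds hlt)
  have hpos : ∀ᶠ t in 𝓝[>] x, 0 < deriv g t := by
    have h1 : ∀ᶠ t in 𝓝[>] x, 0 < slope (deriv g) x t :=
      hslope.filter_mono (nhdsWithin_mono x (fun t ht => ne_of_gt ht))
    filter_upwards [h1, self_mem_nhdsWithin] with t ht ht'
    have hx : (0:ℝ) < t - x := sub_pos.2 ht'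
    have h2 : 0 < (t - x)⁻¹ * (deriv g t - deriv g x) := by
      simpa [slope, vsub_eq_sub] using ht
    have h3 : 0 < deriv g t - deriv g x := by
      by_contra hc
      push_neg at hc
      nlinarith [inv_pos.2 hx]
    linarith
  obtain ⟨b, hb, hIoo⟩ := mem_nhdsGT_iff_exists_Ioo_subset.1 hpos
  obtain ⟨ε, hε, hball⟩ := Metric.eventually_nhds_iff.1 (hg.and hmax)
  set d : ℝ := min (b - x) ε / 2 with hdd
  have hd0 : 0 < d := by
    have : 0 < b - x := sub_pos.2 hb
    positivity
  set y : ℝ := x + d with hy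
  have hxy : x < y := by simp [hy, hd0]
  have hsub : Icc x y ⊆ Metric.ball x ε := by
    intro t ht
    simp only [Metric.mem_ball, Real.dist_eq]
    have h1 : t - x ≤ d := by simp [hy] at ht; linarith [ht.2]
    have h2 : 0 ≤ t - x := by linarith [ht.1]
    have : d < ε := by
      have := min_le_right (b - x) ε
      simp only [hdd]
      linarith
    rw [abs_of_nonneg h2]; linarith
  have hmono : StrictMonoOn g (Icc x y) := by
    apply strictMonoOn_of_deriv_pos (convex_Icc x y)
    · intro t ht
      exact ((hball (by simpa [Real.dist_eq] using hsub ht)).1).continuousAt.continuousWithinAt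
    · intro t ht
      rw [interior_Icc] at ht
      apply hIoo
      refine ⟨ht.1, ?_⟩
      have : d < b - x := by
        have := min_le_left (b - x) ε
        have hbx : 0 < b - x := sub_pos.2 hb
        simp only [hdd]; linarith
      have := ht.2
      simp only [hy] at this
      linarith [ht.2]
  have hgy : g x < g y := hmono (left_mem_Icc.2 hxy.le) (right_mem_Icc.2 hxy.le) hxy
  have hle : g y ≤ g x := by
    have : dist y x < ε := by
      simp only [Real.dist_eq, hy]
      have : d < ε := by
        have := min_le_right (b - x) ε
        simp only [hdd]; linarith
      rw [abs_of_nonneg (by linarith : (0:ℝ) ≤ x + d - x)]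
      linarith
    exact (hball this).2
  linarith

lemma pxx_nonpos_of_isLocalMax {v : ℝ × ℝ → ℝ} {q : ℝ × ℝ}
    (hdiff : ∀ᶠ w in 𝓝 q, DifferentiableAt ℝ v w)
    (hd2 : DifferentiableAt ℝ (fun t => px v (t, q.2)) q.1)
    (hmax : IsLocalMax v q) : px (px v) q ≤ 0 := by
  have htend : Tendsto (fun t : ℝ => ((t, q.2) : ℝ × ℝ)) (𝓝 q.1) (𝓝 q) :=
    Continuous.tendsto' (by continuity) _ _ rfl
  have hgd : ∀ᶠ t in 𝓝 q.1, DifferentiableAt ℝ (fun s => v (s, q.2)) t := by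
    filter_upwards [htend.eventually hdiff] with t ht
    exact (slice_x_hasDerivAt ht).differentiableAt
  have hmax' : IsLocalMax (fun t => v (t, q.2)) q.1 := htend.eventually hmax
  have hEq : (fun t => px v (t, q.2)) = deriv (fun s => v (s, q.2)) := funext fun t => rfl
  rw [hEq] at hd2
  have key := deriv2_nonpos_of_isLocalMax hgd hd2 hmax'
  have : px (px v) q = deriv (deriv (fun s => v (s, q.2))) q.1 := by
    show deriv (fun t => px v (t, q.2)) q.1 = _
    rw [hEq]
  rw [this]
  exact key

lemma pyy_nonpos_of_isLocalMax {v : ℝ × ℝ → ℝ} {q : ℝ × ℝ}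
    (hdiff : ∀ᶠ w in 𝓝 q, DifferentiableAt ℝ v w)
    (hd2 : DifferentiableAt ℝ (fun t => py v (q.1, t)) q.2)
    (hmax : IsLocalMax v q) : py (py v) q ≤ 0 := by
  have htend : Tendsto (fun t : ℝ => ((q.1, t) : ℝ × ℝ)) (𝓝 q.2) (𝓝 q) :=
    Continuous.tendsto' (by continuity) _ _ rfl
  have hgd : ∀ᶠ t in 𝓝 q.2, DifferentiableAt ℝ (fun s => v (q.1, s)) t := by
    filter_upwards [htend.eventually hdiff] with t ht
    exact (slice_y_hasDerivAt ht).differentiableAt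
  have hmax' : IsLocalMax (fun t => v (q.1, t)) q.2 := htend.eventually hmax
  have hEq : (fun t => py v (q.1, t)) = deriv (fun s => v (q.1, s)) := funext fun t => rfl
  rw [hEq] at hd2
  have key := deriv2_nonpos_of_isLocalMax hgd hd2 hmax'
  have : py (py v) q = deriv (deriv (fun s => v (q.1, s))) q.2 := by
    show deriv (fun t => py v (q.1, t)) q.2 = _
    rw [hEq]
  rw [this]
  exact key

lemma px_add_quad {u : ℝ × ℝ → ℝ} {s : Set (ℝ × ℝ)} (hs : IsOpen s)
    (hu : ContDiffOn ℝ 2 u s) (c : ℝ) {q : ℝ × ℝ} (hq : q ∈ s) :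
    px (fun w => u w + c * (w.1 ^ 2 + w.2 ^ 2)) q = px u q + 2 * c * q.1 := by
  have h1 : DifferentiableAt ℝ (fun t => u (t, q.2)) q.1 :=
    (slice_x_hasDerivAt ((hu.differentiableOn (by norm_num)).differentiableAt
      (hs.mem_nhds hq))).differentiableAt
  have h2 : HasDerivAt (fun t : ℝ => c * (t ^ 2 + q.2 ^ 2)) (2 * c * q.1) q.1 := by
    have h := ((hasDerivAt_pow 2 q.1).add_const (q.2 ^ 2)).const_mul c
    exact h.congr_deriv (by norm_num; ring)
  show deriv (fun t => u (t, q.2) + c * (t ^ 2 + q.2 ^ 2)) q.1 = _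
  rw [deriv_fun_add h1 h2.differentiableAt, h2.deriv]
  rfl

lemma py_add_quad {u : ℝ × ℝ → ℝ} {s : Set (ℝ × ℝ)} (hs : IsOpen s)
    (hu : ContDiffOn ℝ 2 u s) (c : ℝ) {q : ℝ × ℝ} (hq : q ∈ s) :
    py (fun w => u w + c * (w.1 ^ 2 + w.2 ^ 2)) q = py u q + 2 * c * q.2 := by
  have h1 : DifferentiableAt ℝ (fun t => u (q.1, t)) q.2 :=
    (slice_y_hasDerivAt ((hu.differentiableOn (by norm_num)).differentiableAt
      (hs.mem_nhds hq))).differentiableAt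
  have h2 : HasDerivAt (fun t : ℝ => c * (q.1 ^ 2 + t ^ 2)) (2 * c * q.2) q.2 := by
    have h := ((hasDerivAt_pow 2 q.2).const_add (q.1 ^ 2)).const_mul c
    exact h.congr_deriv (by norm_num; ring)
  show deriv (fun t => u (q.1, t) + c * (q.1 ^ 2 + t ^ 2)) q.2 = _
  rw [deriv_fun_add h1 h2.differentiableAt, h2.deriv]
  rfl

lemma lapl_add_quad {u : ℝ × ℝ → ℝ} {s : Set (ℝ × ℝ)} (hs : IsOpen s)
    (hu : ContDiffOn ℝ 2 u s) (c : ℝ) {p : ℝ × ℝ} (hp : p ∈ s) :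
    lapl (fun w => u w + c * (w.1 ^ 2 + w.2 ^ 2)) p = lapl u p + 4 * c := by
  have hlinx : HasDerivAt (fun t : ℝ => 2 * c * t) (2 * c) p.1 := by
    simpa using (hasDerivAt_id p.1).const_mul (2 * c)
  have hliny : HasDerivAt (fun t : ℝ => 2 * c * t) (2 * c) p.2 := by
    simpa using (hasDerivAt_id p.2).const_mul (2 * c)
  have hx2 : px (px (fun w => u w + c * (w.1 ^ 2 + w.2 ^ 2))) p = px (px u) p + 2 * c := by
    have hevx : (fun t => px (fun w => u w + c * (w.1 ^ 2 + w.2 ^ 2)) (t, p.2))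
        =ᶠ[𝓝 p.1] (fun t => px u (t, p.2) + 2 * c * t) := by
      filter_upwards [eventually_slice_x_mem hs hp] with t ht
      exact px_add_quad hs hu c ht
    show deriv (fun t => px (fun w => u w + c * (w.1 ^ 2 + w.2 ^ 2)) (t, p.2)) p.1 = _
    rw [hevx.deriv_eq, deriv_fun_add (px_slice_diff hs hu hp) hlinx.differentiableAt, hlinx.deriv]
    rfl
  have hy2 : py (py (fun w => u w + c * (w.1 ^ 2 + w.2 ^ 2))) p = py (py u) p + 2 * c := by
    have hevy : (fun t => py (fun w => u w + c * (w.1 ^ 2 + w.2 ^ 2)) (p.1, t))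
        =ᶠ[𝓝 p.2] (fun t => py u (p.1, t) + 2 * c * t) := by
      filter_upwards [eventually_slice_y_mem hs hp] with t ht
      exact py_add_quad hs hu c ht
    show deriv (fun t => py (fun w => u w + c * (w.1 ^ 2 + w.2 ^ 2)) (p.1, t)) p.2 = _
    rw [hevy.deriv_eq, deriv_fun_add (py_slice_diff hs hu hp) hliny.differentiableAt, hliny.deriv]
    rfl
  show _ + _ = _
  rw [hx2, hy2]
  show px (px u) p + 2 * c + (py (py u) p + 2 * c) = px (px u) p + py (py u) p + 4 * c
  ring

theorem stmt18 (Ω : Set (ℝ × ℝ)) (hΩo : IsOpen Ω)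
    (hΩb : Bornology.IsBounded Ω) (hΩ2 : C2Boundary Ω)
    (f : ℝ → ℝ) (hf : ContDiff ℝ 1 f) (hf0 : 0 < f 0)
    (C : ℝ) (hC : 0 < C)
    (u : ℝ → (ℝ × ℝ) → ℝ)
    (hcont : ∀ lam ∈ Set.Ioc (0:ℝ) 1, ContinuousOn (u lam) (closure Ω))
    (hreg : ∀ lam ∈ Set.Ioc (0:ℝ) 1, ContDiffOn ℝ 2 (u lam) Ω)
    (hpos : ∀ lam ∈ Set.Ioc (0:ℝ) 1, ∀ p ∈ Ω, 0 < u lam p)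
    (hbd : ∀ lam ∈ Set.Ioc (0:ℝ) 1, ∀ p ∈ frontier Ω, u lam p = 0)
    (hpde : ∀ lam ∈ Set.Ioc (0:ℝ) 1, ∀ p ∈ Ω, lapl (u lam) p = -(lam * f (u lam p)))
    (hub : ∀ lam ∈ Set.Ioc (0:ℝ) 1, ∀ p ∈ Ω, u lam p ≤ C) :
    ∃ C' > (0:ℝ), ∀ lam ∈ Set.Ioc (0:ℝ) 1, ∀ p ∈ Ω,
      0 < u lam p ∧ u lam p ≤ C' * lam := by
  -- a bound for `f` on `[0, C]`
  obtain ⟨t0, ht0, hMf'⟩ := isCompact_Icc.exists_isMaxOn ⟨0, le_refl 0, hC.le⟩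
    (hf.continuous.continuousOn : ContinuousOn f (Icc 0 C))
  have hMf : ∀ t ∈ Icc (0:ℝ) C, f t ≤ f t0 := fun t ht => isMaxOn_iff.1 hMf' t ht
  set M : ℝ := f t0 + 1 with hMdef
  have hM0 : 0 < M := by
    have := hMf 0 ⟨le_refl 0, hC.le⟩
    simp only [hMdef]
    linarith
  -- a bound for `q.1 ^ 2 + q.2 ^ 2` on `closure Ω`
  obtain ⟨r, hr⟩ := hΩb.subset_closedBall 0
  set R : ℝ := max (2 * r ^ 2) 1 with hRdef
  have hR1 : (0:ℝ) < R := lt_of_lt_of_le one_pos (le_max_right _ _)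
  have hRbound : ∀ q ∈ closure Ω, q.1 ^ 2 + q.2 ^ 2 ≤ R := by
    intro q hq
    have hqb : q ∈ Metric.closedBall (0 : ℝ × ℝ) r :=
      closure_minimal hr Metric.isClosed_closedBall hq
    have hqn : ‖q‖ ≤ r := by simpa using hqb
    have h1 : |q.1| ≤ r := le_trans (norm_fst_le q) hqn
    have h2 : |q.2| ≤ r := le_trans (norm_snd_le q) hqn
    have h3 : q.1 ^ 2 ≤ r ^ 2 := by nlinarith [abs_nonneg q.1, sq_abs q.1]
    have h4 : q.2 ^ 2 ≤ r ^ 2 := by nlinarith [abs_nonneg q.2, sq_abs q.2]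
    calc q.1 ^ 2 + q.2 ^ 2 ≤ 2 * r ^ 2 := by linarith
    _ ≤ R := le_max_left _ _
  refine ⟨M * R / 4, by positivity, ?_⟩
  intro lam hlam p hp
  refine ⟨hpos lam hlam p hp, ?_⟩
  have hlam0 : 0 < lam := hlam.1
  set c : ℝ := lam * M / 4 with hcdef
  have hc0 : 0 < c := by positivity
  set v : ℝ × ℝ → ℝ := fun w => u lam w + c * (w.1 ^ 2 + w.2 ^ 2) with hvdef
  have hKc : IsCompact (closure Ω) := hΩb.isCompact_closure
  have hvc : ContinuousOn v (closure Ω) :=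
    (hcont lam hlam).add (Continuous.continuousOn (by continuity))
  obtain ⟨q, hqmem, hqmax⟩ := hKc.exists_isMaxOn ⟨p, subset_closure hp⟩ hvc
  have humem : ∀ w ∈ Ω, DifferentiableAt ℝ (u lam) w := fun w hw =>
    ((hreg lam hlam).differentiableOn (by norm_num)).differentiableAt (hΩo.mem_nhds hw)
  by_cases hqΩ : q ∈ Ω
  · exfalso
    have hlocal : IsLocalMax v q :=
      eventually_nhdsWithin_of_forall (s := Ω) (fun w hw => isMaxOn_iff.1 hqmax w
        (subset_closure hw)) |>.filter_mono (le_of_eq (nhdsWithin_eq_nhds.2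
          (hΩo.mem_nhds hqΩ)).symm) |>.mono (fun w hw => hw)
    have hdiff : ∀ᶠ w in 𝓝 q, DifferentiableAt ℝ v w := by
      filter_upwards [hΩo.mem_nhds hqΩ] with w hw
      exact (humem w hw).add (by fun_prop)
    have hd2x : DifferentiableAt ℝ (fun t => px v (t, q.2)) q.1 := by
      have hdx : DifferentiableAt ℝ (fun t => px (u lam) (t, q.2) + 2 * c * t) q.1 :=
        (px_slice_diff hΩo (hreg lam hlam) hqΩ).add (by fun_prop)
      refine hdx.congr_of_eventuallyEq ?_
      filter_upwards [eventually_slice_x_mem hΩo hqΩ] with t ht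
      exact px_add_quad hΩo (hreg lam hlam) c ht
    have hd2y : DifferentiableAt ℝ (fun t => py v (q.1, t)) q.2 := by
      have hdy : DifferentiableAt ℝ (fun t => py (u lam) (q.1, t) + 2 * c * t) q.2 :=
        (py_slice_diff hΩo (hreg lam hlam) hqΩ).add (by fun_prop)
      refine hdy.congr_of_eventuallyEq ?_
      filter_upwards [eventually_slice_y_mem hΩo hqΩ] with t ht
      exact py_add_quad hΩo (hreg lam hlam) c ht
    have h1 : px (px v) q ≤ 0 := pxx_nonpos_of_isLocalMax hdiff hd2x hlocal
    have h2 : py (py v) q ≤ 0 := pyy_nonpos_of_isLocalMax hdiff hd2y hlocal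
    have h3 : lapl v q = lapl (u lam) q + 4 * c :=
      lapl_add_quad hΩo (hreg lam hlam) c hqΩ
    have h4 : lapl (u lam) q = -(lam * f (u lam q)) := hpde lam hlam q hqΩ
    have h5 : f (u lam q) ≤ f t0 :=
      hMf _ ⟨(hpos lam hlam q hqΩ).le, hub lam hlam q hqΩ⟩
    have h6 : lapl v q ≤ 0 := by
      show px (px v) q + py (py v) q ≤ 0
      linarith
    rw [h3, h4] at h6
    have h7 : 4 * c = lam * M := by rw [hcdef]; ring
    rw [h7, hMdef] at h6
    nlinarith
  · have hqf : q ∈ frontier Ω := by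
      rw [hΩo.frontier_eq]
      exact ⟨hqmem, hqΩ⟩
    have hq0 : u lam q = 0 := hbd lam hlam q hqf
    have hle : v p ≤ v q := isMaxOn_iff.1 hqmax p (subset_closure hp)
    have hqR : q.1 ^ 2 + q.2 ^ 2 ≤ R := hRbound q hqmem
    have hp2 : 0 ≤ p.1 ^ 2 + p.2 ^ 2 := by positivity
    have hvp : v p = u lam p + c * (p.1 ^ 2 + p.2 ^ 2) := rfl
    have hvq : v q = u lam q + c * (q.1 ^ 2 + q.2 ^ 2) := rfl
    rw [hvp, hvq, hq0] at hle
    have hcR : c * (q.1 ^ 2 + q.2 ^ 2) ≤ c * R := mul_le_mul_of_nonneg_left hqR hc0.le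
    have hcp : 0 ≤ c * (p.1 ^ 2 + p.2 ^ 2) := mul_nonneg hc0.le hp2
    have : u lam p ≤ c * R := by linarith
    calc u lam p ≤ c * R := this
    _ = M * R / 4 * lam := by rw [hcdef]; ring
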